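/- Let n ≥ 7, q > 1, n/2 ≤ k ≤ n-2, t = max{2, n-k-1}, and let I, J be a bipartition of Z_q. Then S_{I,J}^{(k)}(n) ∪ U_{I,J}^{(t)}(n) is a cross-bifix-free code; moreover, no proper nonempty prefix of an element of U_{I,J}^{(t)}(n) is a proper nonempty suffix of an element of S_{I,J}^{(k)}(n), and vice versa. -/

import Mathlib

open List

/-- A code (set of words) is cross-bifix-free: no proper nonempty prefix of a
codeword equals a proper nonempty suffix of a codeword. -/
def IsCBF {α : Type*} (C : Set (List α)) : Prop :=
  ∀ u ∈ C, ∀ v ∈ C, ∀ w : List α, w ≠ [] → w.length < u.length → w.length < v.length →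
    ¬ (w <+: u ∧ w <:+ v)

/-- A word is bifix-free: no proper nonempty prefix equals a proper nonempty suffix. -/
def BifixFree {α : Type*} (u : List α) : Prop :=
  ∀ w : List α, w ≠ [] → w.length < u.length → w <+: u → ¬ w <:+ u

/-- `w` is `I^k`-free: no `k` consecutive coordinates of `w` all lie in `I`. -/
def IkFree {α : Type*} (I : Set α) (k : ℕ) (w : List α) : Prop :=
  ¬ ∃ y : List α, y <:+: w ∧ y.length = k ∧ ∀ x ∈ y, x ∈ I

/-- The code `S_{I,J}^{(k)}(n)`: words of length `n` whose first `k` coordinates lie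
in `I`, whose `(k+1)`-th and `n`-th coordinates lie in `J`, and whose subword from
position `k+2` to `n-1` (1-indexed) is `I^k`-free. -/
def Sijk {q : ℕ} (I J : Set (Fin q)) (k n : ℕ) : Set (List (Fin q)) :=
  {w | w.length = n ∧ (∀ x ∈ w.take k, x ∈ I) ∧ (∃ a ∈ J, w[k]? = some a) ∧
       (∃ a ∈ J, w[n-1]? = some a) ∧ IkFree I k ((w.drop (k+1)).take (n - k - 2))}

/-- The set `V_{I,J}^{(t)}(m)` (with ambient parameters `n, k`): words of length `m`
whose first `t` coordinates lie in `I`, whose `(t+1)`-th coordinate lies in `J`,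
whose `(n-k+t)`-th coordinate lies in `I` when `m > n-k+t`, and whose last
coordinate lies in `J`. -/
def Vset {q : ℕ} (I J : Set (Fin q)) (n k t m : ℕ) : Set (List (Fin q)) :=
  {w | w.length = m ∧ (∀ x ∈ w.take t, x ∈ I) ∧ (∃ a ∈ J, w[t]? = some a) ∧
       (n - k + t < m → ∃ a ∈ I, w[n - k + t - 1]? = some a) ∧
       (∃ a ∈ J, w[m - 1]? = some a)}

/-- The set `U_{I,J}^{(t)}(m)`: words of `V_{I,J}^{(t)}(m)` whose suffix of length `ℓ`
does not belong to `V_{I,J}^{(t)}(ℓ)` for all `t+1 ≤ ℓ ≤ m-(t+1)` with `ℓ ≠ n-k+t`. -/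
def Uset {q : ℕ} (I J : Set (Fin q)) (n k t m : ℕ) : Set (List (Fin q)) :=
  {w | w ∈ Vset I J n k t m ∧ ∀ ℓ : ℕ, t + 1 ≤ ℓ → ℓ + (t + 1) ≤ m → ℓ ≠ n - k + t →
       w.drop (m - ℓ) ∉ Vset I J n k t ℓ}


section Aux

variable {α : Type*}

private lemma pref_getElem? {w u : List α} (h : w <+: u) {i : ℕ} (hi : i < w.length) :
    u[i]? = w[i]? := by
  obtain ⟨s, rfl⟩ := h
  rw [List.getElem?_append]; simp [hi]

private lemma suf_getElem? {w v : List α} (h : w <:+ v) {i : ℕ} :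
    v[v.length - w.length + i]? = w[i]? := by
  obtain ⟨p, rfl⟩ := h
  have h1 : (p ++ w).length - w.length = p.length := by simp
  rw [h1, List.getElem?_append_right (by omega)]
  congr 1; omega

private lemma suf_drop {w v : List α} (h : w <:+ v) :
    v.drop (v.length - w.length) = w := by
  obtain ⟨p, rfl⟩ := h
  have h1 : (p ++ w).length - w.length = p.length := by simp
  rw [h1, List.drop_left]

private lemma take_getElem?' {l : List α} {t i : ℕ} (h : i < t) :
    (l.take t)[i]? = l[i]? := by
  rw [List.getElem?_take]; simp [h]

private lemma take_mem_getElem? {l : List α} {I : Set α} {k : ℕ}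
    (h : ∀ x ∈ l.take k, x ∈ I) {i : ℕ} (h1 : i < k) (h2 : i < l.length) :
    ∃ a ∈ I, l[i]? = some a := by
  refine ⟨l[i], ?_, List.getElem?_eq_getElem h2⟩
  have he : (l.take k)[i]? = l[i]? := take_getElem?' h1
  rw [List.getElem?_eq_getElem h2] at he
  have : l[i] ∈ l.take k := by
    rw [List.mem_iff_getElem?]; exact ⟨i, he⟩
  exact h _ this

private lemma forall_take_of_getElem? {l : List α} {I : Set α} {t : ℕ}
    (h : ∀ i, i < t → ∀ a : α, l[i]? = some a → a ∈ I) : ∀ x ∈ l.take t, x ∈ I := by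
  intro x hx
  rw [List.mem_iff_getElem?] at hx
  obtain ⟨i, hi⟩ := hx
  have hit : i < t := by
    by_contra hc
    rw [List.getElem?_take] at hi
    simp [hc] at hi
  have : l[i]? = some x := by rw [← take_getElem?' hit]; exact hi
  exact h i hit x this

end Aux

private lemma clash {q : ℕ} {I J : Set (Fin q)} (hd : I ∩ J = ∅) {w : List (Fin q)} {i : ℕ}
    (h1 : ∃ a ∈ I, w[i]? = some a) (h2 : ∃ b ∈ J, w[i]? = some b) : False := by
  obtain ⟨a, ha, hae⟩ := h1
  obtain ⟨b, hb, hbe⟩ := h2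
  rw [hae] at hbe
  have hab : a = b := Option.some.inj hbe
  have : a ∈ I ∩ J := ⟨ha, hab ▸ hb⟩
  simp [hd] at this
private lemma caseSS {q n k : ℕ} (hn : 7 ≤ n) (hk1 : n ≤ 2 * k) (hk2 : k ≤ n - 2)
    {I J : Set (Fin q)} (hd : I ∩ J = ∅) {u v w : List (Fin q)}
    (hu : u ∈ Sijk I J k n) (hv : v ∈ Sijk I J k n)
    (hw : w ≠ []) (hlen : w.length < n) (hpre : w <+: u) (hsuf : w <:+ v) : False := by
  obtain ⟨hul, huI, ⟨a, haJ, hak⟩, -, -⟩ := hu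
  obtain ⟨hvl, hvI, ⟨c, hcJ, hck⟩, ⟨b, hbJ, hbn⟩, -⟩ := hv
  set m := w.length with hm
  have hm1 : 1 ≤ m := List.length_pos_iff.mpr hw
  have hwp : ∀ i : ℕ, i < m → w[i]? = u[i]? := fun i hi => (pref_getElem? hpre hi).symm
  have hws : ∀ i : ℕ, w[i]? = v[n - m + i]? := by
    intro i
    have h := suf_getElem? hsuf (i := i)
    rw [hvl] at h
    exact h.symm
  rcases le_or_gt m k with hmk | hmk
  · refine clash hd (w := w) (i := m - 1) ?_ ?_
    · obtain ⟨x, hx, hxe⟩ := take_mem_getElem? huI (show m - 1 < k by omega) (by omega)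
      exact ⟨x, hx, by rw [hwp (m-1) (by omega)]; exact hxe⟩
    · exact ⟨b, hbJ, by rw [hws (m-1), show n - m + (m-1) = n - 1 by omega]; exact hbn⟩
  · refine clash hd (w := w) (i := k - (n - m)) ?_ ?_
    · obtain ⟨x, hx, hxe⟩ := take_mem_getElem? huI (show k - (n - m) < k by omega) (by omega)
      exact ⟨x, hx, by rw [hwp _ (by omega)]; exact hxe⟩
    · exact ⟨c, hcJ, by rw [hws, show n - m + (k - (n - m)) = k by omega]; exact hck⟩

private lemma caseSU {q n k t : ℕ} (hn : 7 ≤ n) (hk1 : n ≤ 2 * k) (hk2 : k ≤ n - 2)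
    (ht : t = max 2 (n - k - 1)) {I J : Set (Fin q)} (hd : I ∩ J = ∅)
    {u v w : List (Fin q)} (hu : u ∈ Sijk I J k n) (hv : v ∈ Uset I J n k t n)
    (hw : w ≠ []) (hlen : w.length < n) (hpre : w <+: u) (hsuf : w <:+ v) : False := by
  have hk4 : 4 ≤ k := by omega
  have ht2 : 2 ≤ t := by omega
  have htk : t ≤ k - 1 := by omega
  obtain ⟨hul, huI, ⟨a, haJ, hak⟩, -, -⟩ := hu
  obtain ⟨⟨hvl, hvI, ⟨c, hcJ, hct⟩, hvmid, ⟨b, hbJ, hbn⟩⟩, hvU⟩ := hv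
  set m := w.length with hm
  have hm1 : 1 ≤ m := List.length_pos_iff.mpr hw
  have hwp : ∀ i : ℕ, i < m → w[i]? = u[i]? := fun i hi => (pref_getElem? hpre hi).symm
  have hws : ∀ i : ℕ, w[i]? = v[n - m + i]? := by
    intro i
    have h := suf_getElem? hsuf (i := i)
    rw [hvl] at h
    exact h.symm
  rcases le_or_gt m k with hmk | hmk
  · refine clash hd (w := w) (i := m - 1) ?_ ?_
    · obtain ⟨x, hx, hxe⟩ := take_mem_getElem? huI (show m - 1 < k by omega) (by omega)
      exact ⟨x, hx, by rw [hwp (m-1) (by omega)]; exact hxe⟩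
    · exact ⟨b, hbJ, by rw [hws (m-1), show n - m + (m-1) = n - 1 by omega]; exact hbn⟩
  rcases le_or_gt (n - t) m with hmt | hmt
  · refine clash hd (w := w) (i := t - (n - m)) ?_ ?_
    · obtain ⟨x, hx, hxe⟩ := take_mem_getElem? huI (show t - (n - m) < k by omega) (by omega)
      exact ⟨x, hx, by rw [hwp _ (by omega)]; exact hxe⟩
    · exact ⟨c, hcJ, by rw [hws, show n - m + (t - (n - m)) = t by omega]; exact hct⟩
  · set ℓ := m + t - k with hl
    have hdl : ∀ i : ℕ, (v.drop (n - ℓ))[i]? = v[(n - ℓ) + i]? :=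
      fun i => List.getElem?_drop
    have hmem : v.drop (n - ℓ) ∈ Vset I J n k t ℓ := by
      refine ⟨?_, ?_, ?_, ?_, ?_⟩
      · rw [List.length_drop, hvl]; omega
      · refine forall_take_of_getElem? ?_
        intro i hi x hx
        rw [hdl, show n - ℓ + i = n - m + (k - t + i) by omega, ← hws] at hx
        obtain ⟨y, hy, hye⟩ := take_mem_getElem? huI (show k - t + i < k by omega) (by omega)
        have hux : u[k - t + i]? = some x := by rw [← hwp _ (by omega)]; exact hx
        rw [hye] at hux
        exact (Option.some.inj hux) ▸ hy
      · refine ⟨a, haJ, ?_⟩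
        rw [hdl, show n - ℓ + t = n - m + k by omega, ← hws, hwp k (by omega)]
        exact hak
      · intro hcon; exact absurd hcon (by omega)
      · refine ⟨b, hbJ, ?_⟩
        rw [hdl, show n - ℓ + (ℓ - 1) = n - 1 by omega]
        exact hbn
    exact hvU ℓ (by omega) (by omega) (by omega) hmem

private lemma caseUS {q n k t : ℕ} (hn : 7 ≤ n) (hk1 : n ≤ 2 * k) (hk2 : k ≤ n - 2)
    (ht : t = max 2 (n - k - 1)) {I J : Set (Fin q)} (hd : I ∩ J = ∅)
    {u v w : List (Fin q)} (hu : u ∈ Uset I J n k t n) (hv : v ∈ Sijk I J k n)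
    (hw : w ≠ []) (hlen : w.length < n) (hpre : w <+: u) (hsuf : w <:+ v) : False := by
  have hk4 : 4 ≤ k := by omega
  have ht2 : 2 ≤ t := by omega
  have htk : t ≤ k - 1 := by omega
  obtain ⟨⟨hul, huI, ⟨a, haJ, hat⟩, humid, -⟩, -⟩ := hu
  obtain ⟨hvl, hvI, ⟨c, hcJ, hck⟩, ⟨b, hbJ, hbn⟩, -⟩ := hv
  set m := w.length with hm
  have hm1 : 1 ≤ m := List.length_pos_iff.mpr hw
  have hwp : ∀ i : ℕ, i < m → w[i]? = u[i]? := fun i hi => (pref_getElem? hpre hi).symm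
  have hws : ∀ i : ℕ, w[i]? = v[n - m + i]? := by
    intro i
    have h := suf_getElem? hsuf (i := i)
    rw [hvl] at h
    exact h.symm
  rcases le_or_gt m t with hmt | hmt
  · refine clash hd (w := w) (i := m - 1) ?_ ?_
    · obtain ⟨x, hx, hxe⟩ := take_mem_getElem? huI (show m - 1 < t by omega) (by omega)
      exact ⟨x, hx, by rw [hwp (m-1) (by omega)]; exact hxe⟩
    · exact ⟨b, hbJ, by rw [hws (m-1), show n - m + (m-1) = n - 1 by omega]; exact hbn⟩
  rcases le_or_gt (m + k + 1) (n + t) with h1 | h1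
  · -- m ≤ n - k + t - 1
    refine clash hd (w := w) (i := k - (n - m)) ?_ ?_
    · obtain ⟨x, hx, hxe⟩ := take_mem_getElem? huI (show k - (n - m) < t by omega) (by omega)
      exact ⟨x, hx, by rw [hwp _ (by omega)]; exact hxe⟩
    · exact ⟨c, hcJ, by rw [hws, show n - m + (k - (n - m)) = k by omega]; exact hck⟩
  rcases eq_or_lt_of_le (show n - k + t ≤ m by omega) with h2 | h2
  · -- m = n - k + t : last coordinate of w is in I from u's middle condition
    obtain ⟨x, hx, hxe⟩ := humid (by omega)
    refine clash hd (w := w) (i := m - 1) ?_ ?_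
    · exact ⟨x, hx, by
        rw [hwp (m-1) (by omega), show m - 1 = n - k + t - 1 by omega]; exact hxe⟩
    · exact ⟨b, hbJ, by rw [hws (m-1), show n - m + (m-1) = n - 1 by omega]; exact hbn⟩
  · -- m ≥ n - k + t + 1 : w[t] in J from u, in I from v's take k
    refine clash hd (w := w) (i := t) ?_ ?_
    · obtain ⟨x, hx, hxe⟩ := take_mem_getElem? hvI (show n - m + t < k by omega) (by omega)
      exact ⟨x, hx, by rw [hws t]; exact hxe⟩
    · exact ⟨a, haJ, by rw [hwp t (by omega)]; exact hat⟩

private lemma caseUU {q n k t : ℕ} (hn : 7 ≤ n) (hk1 : n ≤ 2 * k) (hk2 : k ≤ n - 2)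
    (ht : t = max 2 (n - k - 1)) {I J : Set (Fin q)} (hd : I ∩ J = ∅)
    {u v w : List (Fin q)} (hu : u ∈ Uset I J n k t n) (hv : v ∈ Uset I J n k t n)
    (hw : w ≠ []) (hlen : w.length < n) (hpre : w <+: u) (hsuf : w <:+ v) : False := by
  have hk4 : 4 ≤ k := by omega
  have ht2 : 2 ≤ t := by omega
  have htk : t ≤ k - 1 := by omega
  have hnt : 2 * t + 1 ≤ n := by omega
  obtain ⟨⟨hul, huI, ⟨a, haJ, hat⟩, humid, -⟩, -⟩ := hu
  obtain ⟨⟨hvl, hvI, ⟨c, hcJ, hct⟩, hvmid, ⟨b, hbJ, hbn⟩⟩, hvU⟩ := hv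
  set m := w.length with hm
  have hm1 : 1 ≤ m := List.length_pos_iff.mpr hw
  have hwp : ∀ i : ℕ, i < m → w[i]? = u[i]? := fun i hi => (pref_getElem? hpre hi).symm
  have hws : ∀ i : ℕ, w[i]? = v[n - m + i]? := by
    intro i
    have h := suf_getElem? hsuf (i := i)
    rw [hvl] at h
    exact h.symm
  rcases le_or_gt m t with hmt | hmt
  · refine clash hd (w := w) (i := m - 1) ?_ ?_
    · obtain ⟨x, hx, hxe⟩ := take_mem_getElem? huI (show m - 1 < t by omega) (by omega)
      exact ⟨x, hx, by rw [hwp (m-1) (by omega)]; exact hxe⟩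
    · exact ⟨b, hbJ, by rw [hws (m-1), show n - m + (m-1) = n - 1 by omega]; exact hbn⟩
  rcases le_or_gt (n - t) m with hmt2 | hmt2
  · refine clash hd (w := w) (i := t - (n - m)) ?_ ?_
    · obtain ⟨x, hx, hxe⟩ := take_mem_getElem? huI (show t - (n - m) < t by omega) (by omega)
      exact ⟨x, hx, by rw [hwp _ (by omega)]; exact hxe⟩
    · exact ⟨c, hcJ, by rw [hws, show n - m + (t - (n - m)) = t by omega]; exact hct⟩
  rcases eq_or_ne m (n - k + t) with h2 | h2
  · obtain ⟨x, hx, hxe⟩ := humid (by omega)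
    refine clash hd (w := w) (i := m - 1) ?_ ?_
    · exact ⟨x, hx, by
        rw [hwp (m-1) (by omega), show m - 1 = n - k + t - 1 by omega]; exact hxe⟩
    · exact ⟨b, hbJ, by rw [hws (m-1), show n - m + (m-1) = n - 1 by omega]; exact hbn⟩
  · have hweq : v.drop (n - m) = w := by
      have h := suf_drop hsuf
      rwa [hvl] at h
    have hmem : v.drop (n - m) ∈ Vset I J n k t m := by
      rw [hweq]
      refine ⟨hm.symm, ?_, ?_, ?_, ?_⟩
      · refine forall_take_of_getElem? ?_
        intro i hi x hx
        obtain ⟨y, hy, hye⟩ := take_mem_getElem? huI (show i < t by omega) (by omega)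
        have hux : u[i]? = some x := by rw [← hwp _ (by omega)]; exact hx
        rw [hye] at hux
        exact (Option.some.inj hux) ▸ hy
      · exact ⟨a, haJ, by rw [hwp t (by omega)]; exact hat⟩
      · intro hcon
        obtain ⟨x, hx, hxe⟩ := humid (by omega)
        exact ⟨x, hx, by rw [hwp _ (by omega)]; exact hxe⟩
      · exact ⟨b, hbJ, by rw [hws (m-1), show n - m + (m-1) = n - 1 by omega]; exact hbn⟩
    exact hvU m (by omega) (by omega) (by omega) hmem
theorem stmt14 (q n k t : ℕ) (hn : 7 ≤ n) (hq : 1 < q) (hk1 : n ≤ 2 * k) (hk2 : k ≤ n - 2)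
    (ht : t = max 2 (n - k - 1))
    (I J : Set (Fin q)) (hIJ : I ∪ J = Set.univ) (hd : I ∩ J = ∅)
    (hI : I.Nonempty) (hJ : J.Nonempty) :
    IsCBF (Sijk I J k n ∪ Uset I J n k t n) ∧
    (∀ u ∈ Uset I J n k t n, ∀ v ∈ Sijk I J k n, ∀ w : List (Fin q),
      w ≠ [] → w.length < n → ¬ (w <+: u ∧ w <:+ v)) ∧
    (∀ u ∈ Sijk I J k n, ∀ v ∈ Uset I J n k t n, ∀ w : List (Fin q),
      w ≠ [] → w.length < n → ¬ (w <+: u ∧ w <:+ v)) := by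
  refine ⟨?_, ?_, ?_⟩
  · intro u hu v hv w hw h1 h2 hcon
    obtain ⟨hpre, hsuf⟩ := hcon
    rcases hu with hu | hu <;> rcases hv with hv | hv
    · exact caseSS hn hk1 hk2 hd hu hv hw (hu.1 ▸ h1) hpre hsuf
    · exact caseSU hn hk1 hk2 ht hd hu hv hw (hu.1 ▸ h1) hpre hsuf
    · exact caseUS hn hk1 hk2 ht hd hu hv hw (hu.1.1 ▸ h1) hpre hsuf
    · exact caseUU hn hk1 hk2 ht hd hu hv hw (hu.1.1 ▸ h1) hpre hsuf
  · intro u hu v hv w hw h1 hcon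
    obtain ⟨hpre, hsuf⟩ := hcon
    exact caseUS hn hk1 hk2 ht hd hu hv hw h1 hpre hsuf
  · intro u hu v hv w hw h1 hcon
    obtain ⟨hpre, hsuf⟩ := hcon
    exact caseSU hn hk1 hk2 ht hd hu hv hw h1 hpre hsuf
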